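/- There exists a constant C > 0 such that for every natural number p ≥ 1, (p+1) · ∫_{0}^{∞} e^{-t} · t^p / (1+t)^{p+2} dt ≤ C · √p · exp(−2√p). -/

import Mathlib

open MeasureTheory

open Set

set_option maxHeartbeats 1000000

lemma aux_cube_le_exp {x : ℝ} (hx : 0 ≤ x) : x ^ 3 ≤ 27 * Real.exp x := by
  have h1 : x / 3 ≤ Real.exp (x / 3) := by
    have := Real.add_one_le_exp (x / 3); linarith
  have h2 : (x / 3) ^ 3 ≤ Real.exp (x / 3) ^ 3 :=
    pow_le_pow_left₀ (by positivity) h1 3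
  have h3 : Real.exp (x / 3) ^ 3 = Real.exp x := by
    rw [← Real.exp_nat_mul]; congr 1; ring
  nlinarith [h2, h3]

lemma aux_int_exp {c : ℝ} (hc : 0 < c) (b : ℝ) :
    ∫ t in Ioi b, Real.exp (-(c * t)) = c⁻¹ * Real.exp (-(c * b)) := by
  have h := integral_comp_mul_left_Ioi (fun x => Real.exp (-x)) b hc
  simp only [integral_exp_neg_Ioi, smul_eq_mul] at h
  exact h

lemma aux_phi_le (p : ℕ) {t : ℝ} (ht : 0 < t) :
    Real.exp (-t) * t ^ p / (1 + t) ^ (p + 2) ≤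
      Real.exp (-(t + p / (1 + t))) / (1 + t) ^ 2 := by
  have hs : (0 : ℝ) < 1 + t := by linarith
  have h1 : t / (1 + t) ≤ Real.exp (-(1 / (1 + t))) := by
    have h := Real.add_one_le_exp (-(1 / (1 + t)))
    have heq : t / (1 + t) = -(1 / (1 + t)) + 1 := by field_simp; ring
    rw [heq]; linarith
  have h2 : (t / (1 + t)) ^ p ≤ Real.exp (-((p : ℝ) / (1 + t))) := by
    calc (t / (1 + t)) ^ p ≤ Real.exp (-(1 / (1 + t))) ^ p :=
          pow_le_pow_left₀ (by positivity) h1 p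
      _ = Real.exp (-((p : ℝ) / (1 + t))) := by
          rw [← Real.exp_nat_mul]; congr 1; ring
  have expand : Real.exp (-t) * t ^ p / (1 + t) ^ (p + 2)
      = Real.exp (-t) * (t / (1 + t)) ^ p / (1 + t) ^ 2 := by
    rw [div_pow, pow_add]; field_simp
  rw [expand, show Real.exp (-(t + (p : ℝ) / (1 + t)))
      = Real.exp (-t) * Real.exp (-((p : ℝ) / (1 + t))) by
    rw [← Real.exp_add]; congr 1; ring]
  gcongr

lemma aux_meas (p : ℕ) : Measurable (fun t : ℝ => Real.exp (-t) * t ^ p / (1 + t) ^ (p + 2)) := by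
  apply Measurable.div
  · exact (Real.measurable_exp.comp measurable_neg).mul (measurable_id.pow_const p)
  · exact (measurable_const.add measurable_id).pow_const (p + 2)

lemma aux_exp_int (b : ℝ) : IntegrableOn (fun t : ℝ => Real.exp (-t)) (Ioi b) := by
  have := exp_neg_integrableOn_Ioi b (zero_lt_one (α := ℝ))
  simpa using this

lemma aux_phi_le_exp (p : ℕ) {t : ℝ} (ht : 0 < t) :
    Real.exp (-t) * t ^ p / (1 + t) ^ (p + 2) ≤ Real.exp (-t) := by
  have hs : (0 : ℝ) < 1 + t := by linarith
  have h1 : t ^ p ≤ (1 + t) ^ (p + 2) :=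
    le_trans (pow_le_pow_left₀ ht.le (by linarith) p)
      (pow_le_pow_right₀ (by linarith) (by omega))
  rw [mul_div_assoc]
  nth_rewrite 2 [← mul_one (Real.exp (-t))]
  gcongr
  rw [div_le_one (by positivity)]
  exact h1

lemma aux_phi_int (p : ℕ) :
    IntegrableOn (fun t : ℝ => Real.exp (-t) * t ^ p / (1 + t) ^ (p + 2)) (Ioi 0) := by
  apply Integrable.mono' (aux_exp_int 0) ((aux_meas p).aestronglyMeasurable)
  filter_upwards [ae_restrict_mem measurableSet_Ioi] with t ht
  have ht' : (0:ℝ) < t := ht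
  rw [Real.norm_eq_abs, abs_of_nonneg (div_nonneg (mul_nonneg (Real.exp_nonneg _)
    (pow_nonneg ht'.le _)) (pow_nonneg (by linarith) _))]
  exact aux_phi_le_exp p ht'

lemma aux_crude (p : ℕ) :
    ∫ t in Ioi (0:ℝ), Real.exp (-t) * t ^ p / (1 + t) ^ (p + 2) ≤ 1 := by
  calc ∫ t in Ioi (0:ℝ), Real.exp (-t) * t ^ p / (1 + t) ^ (p + 2)
      ≤ ∫ t in Ioi (0:ℝ), Real.exp (-t) :=
        setIntegral_mono_on (aux_phi_int p) (aux_exp_int 0) measurableSet_Ioi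
          (fun t ht => aux_phi_le_exp p ht)
    _ = 1 := integral_exp_neg_Ioi_zero

/-- Upper bound for the smallest eigenvalue of the Toeplitz operator with symbol
`e^{-1/|z|²}` on `ℂP¹`. -/
theorem toeplitz_expSymbol_min_eigenvalue_upper :
    ∃ C > 0, ∀ p : ℕ, 1 ≤ p →
      ((p : ℝ) + 1) *
          (∫ t in Set.Ioi (0 : ℝ), Real.exp (-t) * t ^ p / (1 + t) ^ (p + 2)) ≤
        C * Real.sqrt p * Real.exp (-2 * Real.sqrt p) := by
  refine ⟨10 ^ 7, by norm_num, ?_⟩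
  intro p hp
  set φ : ℝ → ℝ := fun t => Real.exp (-t) * t ^ p / (1 + t) ^ (p + 2) with hφdef
  set q : ℝ := Real.sqrt p with hqdef
  have hp0 : (0 : ℝ) ≤ p := Nat.cast_nonneg p
  have hq2 : q ^ 2 = p := Real.sq_sqrt hp0
  have hq1 : 1 ≤ q := by
    rw [hqdef, show (1:ℝ) = Real.sqrt 1 by simp]
    exact Real.sqrt_le_sqrt (by exact_mod_cast hp)
  have hq0 : (0:ℝ) < q := lt_of_lt_of_le one_pos hq1
  set E : ℝ := Real.exp (-2 * q) with hEdef
  have hE : 0 < E := Real.exp_pos _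
  have hI0 : 0 ≤ ∫ t in Ioi (0:ℝ), φ t := by
    apply setIntegral_nonneg measurableSet_Ioi
    intro t ht
    have ht' : (0:ℝ) < t := ht
    exact div_nonneg (mul_nonneg (Real.exp_nonneg _) (pow_nonneg ht'.le _))
      (pow_nonneg (by linarith) _)
  by_cases hbig : 36 ≤ p
  · -- main case
    have hp36 : (36:ℝ) ≤ p := by exact_mod_cast hbig
    have hq6 : 6 ≤ q := by
      rw [hqdef, show (6:ℝ) = Real.sqrt 36 by
        rw [show (36:ℝ) = 6 ^ 2 by norm_num, Real.sqrt_sq (by norm_num)]]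
      exact Real.sqrt_le_sqrt hp36
    set a : ℝ := q / 2 - 1 with hadef
    set b : ℝ := 3 * q / 2 - 1 with hbdef
    have ha0 : 0 < a := by rw [hadef]; linarith
    have hab : a < b := by rw [hadef, hbdef]; linarith
    -- pointwise bounds on the three regions
    have hR1 : ∀ t ∈ Ioc (0:ℝ) a, φ t ≤ Real.exp (1 - 5 * q / 2) := by
      rintro t ⟨ht0, hta⟩
      have hs : (0:ℝ) < 1 + t := by linarith
      have hta' : 1 + t ≤ q / 2 := by rw [hadef] at hta; linarith
      have hdiv : 5 * q / 2 - 1 - t ≤ (p:ℝ) / (1 + t) := by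
        rw [le_div_iff₀ hs]
        nlinarith [mul_nonneg (show (0:ℝ) ≤ q / 2 - (1 + t) by linarith)
          (show (0:ℝ) ≤ 2 * q - (1 + t) by linarith), hq2]
      calc φ t ≤ Real.exp (-(t + p / (1 + t))) / (1 + t) ^ 2 := aux_phi_le p ht0
        _ ≤ Real.exp (-(t + p / (1 + t))) :=
            div_le_self (Real.exp_nonneg _) (by nlinarith [ht0])
        _ ≤ Real.exp (1 - 5 * q / 2) := Real.exp_le_exp.mpr (by linarith)
    have hR2 : ∀ t ∈ Ioc a b, φ t ≤ Real.exp (1 - 2 * q) * (4 / q ^ 2) := by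
      rintro t ⟨hta, htb⟩
      have ht0 : (0:ℝ) < t := lt_trans ha0 hta
      have hs : (0:ℝ) < 1 + t := by linarith
      have hsq : q / 2 ≤ 1 + t := by rw [hadef] at hta; linarith
      have hdiv : 2 * q - 1 - t ≤ (p:ℝ) / (1 + t) := by
        rw [le_div_iff₀ hs]
        nlinarith [sq_nonneg (q - (1 + t)), hq2]
      have h1 : Real.exp (-(t + p / (1 + t))) ≤ Real.exp (1 - 2 * q) :=
        Real.exp_le_exp.mpr (by linarith)
      have h2 : 1 / (1 + t) ^ 2 ≤ 4 / q ^ 2 := by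
        rw [div_le_div_iff₀ (by positivity) (by positivity)]
        nlinarith
      calc φ t ≤ Real.exp (-(t + p / (1 + t))) / (1 + t) ^ 2 := aux_phi_le p ht0
        _ = Real.exp (-(t + p / (1 + t))) * (1 / (1 + t) ^ 2) := by ring
        _ ≤ Real.exp (1 - 2 * q) * (4 / q ^ 2) :=
            mul_le_mul h1 h2 (by positivity) (Real.exp_nonneg _)
    have hR3 : ∀ t ∈ Ioi b, φ t ≤
        Real.exp (1 - 2 * q) * Real.exp (-(1/9 : ℝ)) * Real.exp (-((1/9 : ℝ) * t)) := by
      intro t ht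
      have htb : b < t := ht
      have ht0 : (0:ℝ) < t := lt_trans (lt_trans ha0 hab) htb
      have hs : (0:ℝ) < 1 + t := by linarith
      have hsq : 3 * q / 2 ≤ 1 + t := by rw [hbdef] at htb; linarith
      have hdiv : 2 * q - 1 + (1 + t) / 9 - t ≤ (p:ℝ) / (1 + t) := by
        rw [le_div_iff₀ hs]
        nlinarith [mul_nonneg (show (0:ℝ) ≤ (1 + t) - 3 * q / 2 by linarith)
          (show (0:ℝ) ≤ (1 + t) - 3 * q / 4 by linarith), hq2]
      have hexpeq : Real.exp (-(2 * q - 1 + (1 + t) / 9)) =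
          Real.exp (1 - 2 * q) * Real.exp (-(1/9 : ℝ)) * Real.exp (-((1/9 : ℝ) * t)) := by
        rw [← Real.exp_add, ← Real.exp_add]; congr 1; ring
      calc φ t ≤ Real.exp (-(t + p / (1 + t))) / (1 + t) ^ 2 := aux_phi_le p ht0
        _ ≤ Real.exp (-(t + p / (1 + t))) :=
            div_le_self (Real.exp_nonneg _) (by nlinarith [ht0])
        _ ≤ Real.exp (-(2 * q - 1 + (1 + t) / 9)) := Real.exp_le_exp.mpr (by linarith)
        _ = _ := hexpeq
    -- splitting the integral
    have int2 : IntegrableOn φ (Ioi a) := (aux_phi_int p).mono_set (Ioi_subset_Ioi ha0.le)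
    have int1 : IntegrableOn φ (Ioc 0 a) := (aux_phi_int p).mono_set Ioc_subset_Ioi_self
    have int21 : IntegrableOn φ (Ioc a b) := int2.mono_set Ioc_subset_Ioi_self
    have int22 : IntegrableOn φ (Ioi b) := int2.mono_set (Ioi_subset_Ioi hab.le)
    have hsplit : ∫ t in Ioi (0:ℝ), φ t =
        (∫ t in Ioc (0:ℝ) a, φ t) + ((∫ t in Ioc a b, φ t) + ∫ t in Ioi b, φ t) := by
      rw [← setIntegral_union (Ioc_disjoint_Ioi le_rfl) measurableSet_Ioi int21 int22,
        Ioc_union_Ioi_eq_Ioi hab.le,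
        ← setIntegral_union (Ioc_disjoint_Ioi le_rfl) measurableSet_Ioi int1 int2,
        Ioc_union_Ioi_eq_Ioi ha0.le]
    -- bounds on the three pieces
    have IB1 : ∫ t in Ioc (0:ℝ) a, φ t ≤ a * Real.exp (1 - 5 * q / 2) := by
      calc ∫ t in Ioc (0:ℝ) a, φ t ≤ ∫ _t in Ioc (0:ℝ) a, Real.exp (1 - 5 * q / 2) :=
            setIntegral_mono_on int1 (integrableOn_const measure_Ioc_lt_top.ne)
              measurableSet_Ioc hR1
        _ = a * Real.exp (1 - 5 * q / 2) := by
            rw [setIntegral_const, measureReal_def, Real.volume_Ioc, smul_eq_mul]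
            congr 1
            rw [ENNReal.toReal_ofReal (by linarith)]
            ring
    have IB2 : ∫ t in Ioc a b, φ t ≤ q * (Real.exp (1 - 2 * q) * (4 / q ^ 2)) := by
      calc ∫ t in Ioc a b, φ t ≤ ∫ _t in Ioc a b, Real.exp (1 - 2 * q) * (4 / q ^ 2) :=
            setIntegral_mono_on int21 (integrableOn_const measure_Ioc_lt_top.ne)
              measurableSet_Ioc hR2
        _ = q * (Real.exp (1 - 2 * q) * (4 / q ^ 2)) := by
            rw [setIntegral_const, measureReal_def, Real.volume_Ioc, smul_eq_mul]
            congr 1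
            rw [ENNReal.toReal_ofReal (by linarith)]
            rw [hadef, hbdef]; ring
    have IB3 : ∫ t in Ioi b, φ t ≤ 9 * Real.exp (1 - 2 * q) * Real.exp (-(q / 6)) := by
      have hψint : IntegrableOn
          (fun t : ℝ => Real.exp (1 - 2 * q) * Real.exp (-(1/9 : ℝ)) *
            Real.exp (-((1/9 : ℝ) * t))) (Ioi b) := by
        apply Integrable.const_mul
        have := exp_neg_integrableOn_Ioi b (show (0:ℝ) < 1/9 by norm_num)
        exact (by simpa [neg_mul] using this :
          IntegrableOn (fun t : ℝ => Real.exp (-((1/9 : ℝ) * t))) (Ioi b))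
      calc ∫ t in Ioi b, φ t
          ≤ ∫ t in Ioi b, Real.exp (1 - 2 * q) * Real.exp (-(1/9 : ℝ)) *
              Real.exp (-((1/9 : ℝ) * t)) :=
            setIntegral_mono_on int22 hψint measurableSet_Ioi hR3
        _ = Real.exp (1 - 2 * q) * Real.exp (-(1/9 : ℝ)) *
              ((1/9 : ℝ)⁻¹ * Real.exp (-((1/9 : ℝ) * b))) := by
            rw [MeasureTheory.integral_const_mul, aux_int_exp (by norm_num) b]
        _ = 9 * Real.exp (1 - 2 * q) *
              (Real.exp (-(1/9 : ℝ)) * Real.exp (-((1/9 : ℝ) * b))) := by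
            norm_num; ring
        _ = 9 * Real.exp (1 - 2 * q) * Real.exp (-(q / 6)) := by
            rw [← Real.exp_add]
            congr 2
            rw [hbdef]; ring
    -- numeric facts
    have he3 : Real.exp 1 ≤ 3 := le_of_lt (lt_trans Real.exp_one_lt_d9 (by norm_num))
    have hc1 : Real.exp (1 - 5 * q / 2) = Real.exp 1 * E * Real.exp (-(q / 2)) := by
      rw [hEdef, ← Real.exp_add, ← Real.exp_add]; congr 1; ring
    have hc2 : Real.exp (1 - 2 * q) = Real.exp 1 * E := by
      rw [hEdef, ← Real.exp_add]; congr 1; ring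
    have hcube1 : q ^ 3 * Real.exp (-(q / 2)) ≤ 216 := by
      have h := aux_cube_le_exp (show (0:ℝ) ≤ q / 2 by linarith)
      have hq3 : q ^ 3 ≤ 216 * Real.exp (q / 2) := by nlinarith [h]
      calc q ^ 3 * Real.exp (-(q / 2)) ≤ 216 * Real.exp (q / 2) * Real.exp (-(q / 2)) :=
            mul_le_mul_of_nonneg_right hq3 (Real.exp_nonneg _)
        _ = 216 := by rw [mul_assoc, ← Real.exp_add]; simp
    have hcube2 : q ^ 3 * Real.exp (-(q / 6)) ≤ 5832 := by
      have h := aux_cube_le_exp (show (0:ℝ) ≤ q / 6 by linarith)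
      have hq3 : q ^ 3 ≤ 5832 * Real.exp (q / 6) := by nlinarith [h]
      calc q ^ 3 * Real.exp (-(q / 6)) ≤ 5832 * Real.exp (q / 6) * Real.exp (-(q / 6)) :=
            mul_le_mul_of_nonneg_right hq3 (Real.exp_nonneg _)
        _ = 5832 := by rw [mul_assoc, ← Real.exp_add]; simp
    -- assemble
    have hp1 : (p : ℝ) + 1 ≤ 2 * q ^ 2 := by rw [hq2]; linarith
    set X : ℝ := Real.exp (-(q / 2)) with hXdef
    set Y : ℝ := Real.exp (-(q / 6)) with hYdef
    have hX : (0:ℝ) ≤ X := Real.exp_nonneg _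
    have hY : (0:ℝ) ≤ Y := Real.exp_nonneg _
    have he0 : (0:ℝ) < Real.exp 1 := Real.exp_pos _
    have IB1' : ∫ t in Ioc (0:ℝ) a, φ t ≤ q / 2 * (Real.exp 1 * E * X) := by
      rw [← hc1]
      refine le_trans IB1 (mul_le_mul_of_nonneg_right ?_ (Real.exp_nonneg _))
      rw [hadef]; linarith
    have IB2' : ∫ t in Ioc a b, φ t ≤ q * (Real.exp 1 * E * (4 / q ^ 2)) := by
      rw [← hc2]; exact IB2
    have IB3' : ∫ t in Ioi b, φ t ≤ 9 * (Real.exp 1 * E) * Y := by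
      rw [← hc2]; exact le_of_le_of_eq IB3 (by ring)
    have hIb : (∫ t in Ioi (0:ℝ), φ t) ≤
        q / 2 * (Real.exp 1 * E * X) + q * (Real.exp 1 * E * (4 / q ^ 2))
          + 9 * (Real.exp 1 * E) * Y := by
      rw [hsplit]; linarith [IB1', IB2', IB3']
    calc ((p : ℝ) + 1) * ∫ t in Ioi (0:ℝ), φ t
        ≤ (2 * q ^ 2) * (q / 2 * (Real.exp 1 * E * X)
            + q * (Real.exp 1 * E * (4 / q ^ 2))
            + 9 * (Real.exp 1 * E) * Y) := by
          apply mul_le_mul hp1 hIb hI0 (by positivity)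
      _ = Real.exp 1 * E * (q ^ 3 * X)
            + 8 * q * (Real.exp 1 * E) + 18 * (Real.exp 1 * E) * (q ^ 2 * Y) := by
          field_simp
          ring
      _ ≤ 3 * E * 216 + 8 * q * (3 * E) + 18 * (3 * E) * (q ^ 2 * Y) := by
          have hq2Y : q ^ 2 * Y ≤ 5832 := by nlinarith [hcube2, hq1, hY]
          have t1 : Real.exp 1 * E * (q ^ 3 * X) ≤ 3 * E * 216 := by
            have h1 : Real.exp 1 * (q ^ 3 * X) ≤ 3 * 216 :=
              mul_le_mul he3 hcube1 (by positivity) (by norm_num)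
            nlinarith [hE.le, h1]
          have t2 : 8 * q * (Real.exp 1 * E) ≤ 8 * q * (3 * E) := by
            have : Real.exp 1 * E ≤ 3 * E := mul_le_mul_of_nonneg_right he3 hE.le
            nlinarith [hq0.le]
          have t3 : 18 * (Real.exp 1 * E) * (q ^ 2 * Y) ≤ 18 * (3 * E) * (q ^ 2 * Y) := by
            have : Real.exp 1 * E ≤ 3 * E := mul_le_mul_of_nonneg_right he3 hE.le
            nlinarith [mul_nonneg (pow_nonneg hq0.le 2) hY]
          linarith [t1, t2, t3]
      _ ≤ 10 ^ 7 * q * E := by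
          have hq2Y : q ^ 2 * Y ≤ 5832 := by nlinarith [hcube2, hq1, hY]
          have hqE : (0:ℝ) ≤ q * E := mul_nonneg hq0.le hE.le
          have hEq : E ≤ q * E := le_mul_of_one_le_left hE.le hq1
          have h54 : 18 * (3 * E) * (q ^ 2 * Y) ≤ 54 * 5832 * E := by
            nlinarith [mul_le_mul_of_nonneg_left hq2Y (show (0:ℝ) ≤ 54 * E by positivity)]
          linarith [h54, hEq, hqE]
  · -- small p
    push_neg at hbig
    have hple : (p : ℝ) + 1 ≤ 36 := by
      have : p + 1 ≤ 36 := hbig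
      exact_mod_cast this
    have hqle : q ≤ 6 := by
      rw [hqdef, show (6:ℝ) = Real.sqrt 36 by
        rw [show (36:ℝ) = 6 ^ 2 by norm_num, Real.sqrt_sq (by norm_num)]]
      exact Real.sqrt_le_sqrt (by exact_mod_cast hbig.le)
    have hexp12 : Real.exp (-12 : ℝ) ≤ E := Real.exp_le_exp.mpr (by linarith)
    have he12 : Real.exp (12 : ℝ) ≤ 270000 := by
      have h1 : Real.exp 1 ≤ 2.72 := le_of_lt (lt_trans Real.exp_one_lt_d9 (by norm_num))
      have h2 : Real.exp (12:ℝ) = Real.exp 1 ^ 12 := by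
        rw [← Real.exp_nat_mul]; norm_num
      rw [h2]
      calc Real.exp 1 ^ 12 ≤ (2.72:ℝ) ^ 12 :=
            pow_le_pow_left₀ (Real.exp_nonneg _) h1 12
        _ ≤ 270000 := by norm_num
    have key : (36:ℝ) ≤ 10 ^ 7 * Real.exp (-12 : ℝ) := by
      rw [Real.exp_neg, ← div_eq_mul_inv, le_div_iff₀ (Real.exp_pos _)]
      nlinarith [he12]
    have hIle := aux_crude p
    calc ((p : ℝ) + 1) * ∫ t in Ioi (0:ℝ), φ t ≤ 36 * 1 := by
          apply mul_le_mul hple hIle hI0 (by norm_num)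
      _ ≤ 10 ^ 7 * Real.exp (-12:ℝ) := by linarith [key]
      _ ≤ 10 ^ 7 * (q * E) := by
          have : Real.exp (-12:ℝ) ≤ q * E := by
            calc Real.exp (-12:ℝ) ≤ E := hexp12
              _ ≤ q * E := le_mul_of_one_le_left hE.le hq1
          nlinarith [this]
      _ = 10 ^ 7 * q * E := by ring
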